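/- Let X be a finite nonempty set, q : X → ℤ a quality function, ε > 0, and let M be the distribution on X assigning to each y probability proportional to exp(ε·q(y)/2). Then for every β ∈ (0,1), the probability under M that q(y) < max_{x∈X} q(x) − (2/ε)·ln(|X|/β) is at most β. -/

import Mathlib

open scoped Classical in
theorem stmt8 {X : Type*} [Fintype X] [Nonempty X] (q : X → ℤ) (ε β : ℝ)
    (hε : 0 < ε) (hβ0 : 0 < β) (hβ1 : β < 1) :
    (∑ y ∈ Finset.univ.filter (fun y : X =>
        (q y : ℝ) < ((Finset.univ.sup' Finset.univ_nonempty q : ℤ) : ℝ)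
          - (2 / ε) * Real.log (Fintype.card X / β)),
        Real.exp (ε * q y / 2)) /
      (∑ x : X, Real.exp (ε * q x / 2)) ≤ β := by
  set OPT : ℝ := ((Finset.univ.sup' Finset.univ_nonempty q : ℤ) : ℝ) with hOPT
  have hcard : (0 : ℝ) < Fintype.card X := by
    exact_mod_cast Fintype.card_pos
  have hcb : (0 : ℝ) < Fintype.card X / β := div_pos hcard hβ0
  -- denominator lower bound
  obtain ⟨x0, _, hx0⟩ := Finset.exists_mem_eq_sup' Finset.univ_nonempty q
  have hqx0 : (q x0 : ℝ) = OPT := by rw [hOPT, hx0]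
  have hD : Real.exp (ε * OPT / 2) ≤ ∑ x : X, Real.exp (ε * q x / 2) := by
    calc Real.exp (ε * OPT / 2) = Real.exp (ε * q x0 / 2) := by rw [hqx0]
      _ ≤ ∑ x : X, Real.exp (ε * q x / 2) :=
        Finset.single_le_sum (f := fun x => Real.exp (ε * q x / 2)) (fun x _ => (Real.exp_pos _).le) (Finset.mem_univ x0)
  have hDpos : (0 : ℝ) < ∑ x : X, Real.exp (ε * q x / 2) :=
    lt_of_lt_of_le (Real.exp_pos _) hD
  rw [div_le_iff₀ hDpos]
  -- numerator bound
  have hterm : ∀ y ∈ Finset.univ.filter (fun y : X =>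
      (q y : ℝ) < OPT - (2 / ε) * Real.log (Fintype.card X / β)),
      Real.exp (ε * q y / 2) ≤ Real.exp (ε * OPT / 2) * (β / Fintype.card X) := by
    intro y hy
    have hy' : (q y : ℝ) < OPT - (2 / ε) * Real.log (Fintype.card X / β) :=
      (Finset.mem_filter.mp hy).2
    have h1 : ε * q y / 2 ≤ ε * OPT / 2 - Real.log (Fintype.card X / β) := by
      have := mul_lt_mul_of_pos_left hy' hε
      have hεne : ε ≠ 0 := ne_of_gt hε
      rw [mul_sub] at this
      have h2 : ε * (2 / ε * Real.log (Fintype.card X / β)) = 2 * Real.log (Fintype.card X / β) := by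
        field_simp
      linarith
    calc Real.exp (ε * q y / 2)
        ≤ Real.exp (ε * OPT / 2 - Real.log (Fintype.card X / β)) := Real.exp_le_exp.mpr h1
      _ = Real.exp (ε * OPT / 2) * (β / Fintype.card X) := by
          rw [Real.exp_sub, Real.exp_log hcb]
          field_simp
  calc (∑ y ∈ Finset.univ.filter (fun y : X =>
        (q y : ℝ) < OPT - (2 / ε) * Real.log (Fintype.card X / β)),
        Real.exp (ε * q y / 2))
      ≤ ∑ _y ∈ Finset.univ.filter (fun y : X =>
        (q y : ℝ) < OPT - (2 / ε) * Real.log (Fintype.card X / β)),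
        Real.exp (ε * OPT / 2) * (β / Fintype.card X) := Finset.sum_le_sum hterm
    _ = (Finset.univ.filter (fun y : X =>
        (q y : ℝ) < OPT - (2 / ε) * Real.log (Fintype.card X / β))).card *
        (Real.exp (ε * OPT / 2) * (β / Fintype.card X)) := by
          rw [Finset.sum_const, nsmul_eq_mul]
    _ ≤ (Fintype.card X : ℝ) * (Real.exp (ε * OPT / 2) * (β / Fintype.card X)) := by
          apply mul_le_mul_of_nonneg_right
          · exact_mod_cast Finset.card_filter_le _ _
          · positivity
    _ = β * Real.exp (ε * OPT / 2) := by field_simp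
    _ ≤ β * ∑ x : X, Real.exp (ε * q x / 2) :=
          mul_le_mul_of_nonneg_left hD hβ0.le
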